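/- Let k be a field of characteristic zero, and let R be an integral domain k-algebra endowed with a nontrivial k-linear derivation δ. Define on the polynomial ring R[t] the bracket {p(t), q(t)} := p^δ(t)·q'(t) − p'(t)·q^δ(t), where p^δ denotes the polynomial obtained by applying δ to the coefficients of p and p' denotes the formal derivative d/dt. Then this is a Poisson bracket over k on R[t], and moreover: (1) the Poisson center of Frac(R[t]) (with the uniquely extended bracket) is equal to the field of constants of (Frac(R), δ), i.e., to {f ∈ Frac(R) : δ(f) = 0}; and (2) if P is a prime differential ideal of R, then the extension PR[t] is a Poisson prime ideal of R[t]. -/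

import Mathlib

/-- A Poisson bracket on a commutative `k`-algebra `A`: a `k`-bilinear map which is
antisymmetric, satisfies the Jacobi identity, and the Leibniz rule. -/
structure PoissonBracket (k A : Type*) [CommRing k] [CommRing A] [Algebra k A] where
  br : A →ₗ[k] A →ₗ[k] A
  antisymm : ∀ a b : A, br a b = - br b a
  jacobi : ∀ a b c : A, br a (br b c) + br c (br a b) + br b (br c a) = 0
  leibniz : ∀ a b c : A, br (a * b) c = a * br b c + b * br a c

/-- An ideal `I` is a Poisson ideal if `{I, A} ⊆ I`. -/
def PoissonBracket.IsPoissonIdeal {k A : Type*} [CommRing k] [CommRing A] [Algebra k A]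
    (pb : PoissonBracket k A) (I : Ideal A) : Prop :=
  ∀ a ∈ I, ∀ b : A, pb.br a b ∈ I

/-- `p^δ`: the polynomial obtained by applying the derivation `δ` to all the
coefficients of `p`. -/
noncomputable def coeffDeriv {k R : Type*} [CommRing k] [CommRing R] [Algebra k R]
    (δ : Derivation k R R) (p : Polynomial R) : Polynomial R :=
  p.sum fun n a => Polynomial.C (δ a) * Polynomial.X ^ n

section Aux

open Polynomial

variable {k R : Type*} [CommRing k] [CommRing R] [Algebra k R] (δ : Derivation k R R)

theorem coeffDeriv_coeff (p : R[X]) (n : ℕ) : (coeffDeriv δ p).coeff n = δ (p.coeff n) := by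
  rw [coeffDeriv, coeff_sum]
  simp only [coeff_C_mul, coeff_X_pow, mul_ite, mul_one, mul_zero]
  rw [Polynomial.sum_def, Finset.sum_ite_eq p.support n (fun i => δ (p.coeff i))]
  split_ifs with h
  · rfl
  · rw [Polynomial.notMem_support_iff.mp h, map_zero]

theorem coeffDeriv_add (p q : R[X]) :
    coeffDeriv δ (p + q) = coeffDeriv δ p + coeffDeriv δ q := by
  ext n; simp [coeffDeriv_coeff]

theorem coeffDeriv_smul (c : k) (p : R[X]) :
    coeffDeriv δ (c • p) = c • coeffDeriv δ p := by
  ext n; simp [coeffDeriv_coeff, Polynomial.coeff_smul]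

theorem coeffDeriv_mul (p q : R[X]) :
    coeffDeriv δ (p * q) = p * coeffDeriv δ q + q * coeffDeriv δ p := by
  ext n
  rw [mul_comm q]
  simp only [coeffDeriv_coeff, coeff_add, coeff_mul, Derivation.leibniz, smul_eq_mul, map_sum]
  rw [← Finset.sum_add_distrib]
  congr 1
  ext x
  ring

theorem coeffDeriv_derivative (p : R[X]) :
    derivative (coeffDeriv δ p) = coeffDeriv δ (derivative p) := by
  ext n
  simp [coeffDeriv_coeff, Polynomial.coeff_derivative, mul_comm]

theorem coeffDeriv_C (a : R) : coeffDeriv δ (C a) = C (δ a) := by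
  ext n; rcases n with _|n <;> simp [coeffDeriv_coeff, Polynomial.coeff_C]

theorem coeffDeriv_X : coeffDeriv δ (X : R[X]) = 0 := by
  ext n; simp [coeffDeriv_coeff, Polynomial.coeff_X]
  split_ifs <;> simp

theorem coeffDeriv_sub (p q : R[X]) :
    coeffDeriv δ (p - q) = coeffDeriv δ p - coeffDeriv δ q := by
  ext n; simp [coeffDeriv_coeff]

theorem test_jacobi (a b c : R[X]) :
    (coeffDeriv δ a * derivative (coeffDeriv δ b * derivative c - derivative b * coeffDeriv δ c)
      - derivative a * coeffDeriv δ (coeffDeriv δ b * derivative c - derivative b * coeffDeriv δ c))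
    + (coeffDeriv δ c * derivative (coeffDeriv δ a * derivative b - derivative a * coeffDeriv δ b)
      - derivative c * coeffDeriv δ (coeffDeriv δ a * derivative b - derivative a * coeffDeriv δ b))
    + (coeffDeriv δ b * derivative (coeffDeriv δ c * derivative a - derivative c * coeffDeriv δ a)
      - derivative b * coeffDeriv δ (coeffDeriv δ c * derivative a - derivative c * coeffDeriv δ a)) = 0 := by
  simp only [derivative_sub, derivative_mul, coeffDeriv_sub, coeffDeriv_mul,
    ← coeffDeriv_derivative]
  ring

noncomputable def polyBr : R[X] →ₗ[k] R[X] →ₗ[k] R[X] :=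
  LinearMap.mk₂ k
    (fun p q => coeffDeriv δ p * derivative q - derivative p * coeffDeriv δ q)
    (fun p p' q => by simp only [coeffDeriv_add, derivative_add]; ring)
    (fun c p q => by
      simp only [coeffDeriv_smul, derivative_smul, smul_mul_assoc, smul_sub])
    (fun p q q' => by simp only [coeffDeriv_add, derivative_add]; ring)
    (fun c p q => by
      simp only [coeffDeriv_smul, derivative_smul, mul_smul_comm, smul_sub])

@[simp] theorem polyBr_apply (p q : R[X]) :
    polyBr δ p q = coeffDeriv δ p * derivative q - derivative p * coeffDeriv δ q := rfl

noncomputable def polyPB : PoissonBracket k R[X] where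
  br := polyBr δ
  antisymm := fun a b => by simp; ring
  jacobi := fun a b c => by simpa using test_jacobi δ a b c
  leibniz := fun a b c => by
    simp only [polyBr_apply, coeffDeriv_mul, derivative_mul]; ring

theorem ideal_part (P : Ideal R) (hP : P.IsPrime) (hd : ∀ x ∈ P, δ x ∈ P) :
    (P.map (Polynomial.C : R →+* Polynomial R)).IsPrime ∧
      ∀ p ∈ P.map (Polynomial.C : R →+* Polynomial R), ∀ b : R[X],
        polyBr δ p b ∈ P.map (Polynomial.C : R →+* Polynomial R) := by
  refine ⟨by haveI := hP; exact Ideal.isPrime_map_C_of_isPrime, fun p hp b => ?_⟩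
  rw [Ideal.mem_map_C_iff] at hp
  have hD : coeffDeriv δ p ∈ P.map (Polynomial.C : R →+* Polynomial R) := by
    rw [Ideal.mem_map_C_iff]
    intro n; rw [coeffDeriv_coeff]; exact hd _ (hp n)
  have hd' : derivative p ∈ P.map (Polynomial.C : R →+* Polynomial R) := by
    rw [Ideal.mem_map_C_iff]
    intro n; rw [Polynomial.coeff_derivative]
    exact Ideal.mul_mem_right _ _ (hp _)
  rw [polyBr_apply]
  exact sub_mem (Ideal.mul_mem_right _ _ hD) (Ideal.mul_mem_right _ _ hd')

theorem const_of_wronskian_zero {K : Type*} [Field K] [CharZero K] (p q : K[X]) (hq : q ≠ 0)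
    (h : derivative p * q = p * derivative q) :
    ∃ a b : K, b ≠ 0 ∧ p * C b = q * C a := by
  classical
  set d := EuclideanDomain.gcd p q with hd
  obtain ⟨u, hu⟩ : d ∣ p := EuclideanDomain.gcd_dvd_left p q
  obtain ⟨v, hv⟩ : d ∣ q := EuclideanDomain.gcd_dvd_right p q
  have hd0 : d ≠ 0 := fun h0 => hq (by rw [hv, h0, zero_mul])
  have hv0 : v ≠ 0 := fun h0 => hq (by rw [hv, h0, mul_zero])
  set A := EuclideanDomain.gcdA p q with hA
  set B := EuclideanDomain.gcdB p q with hB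
  have bez : d = p * A + q * B := EuclideanDomain.gcd_eq_gcd_ab p q
  have hcop : (1 : K[X]) = u * A + v * B := by
    apply mul_left_cancel₀ hd0
    rw [mul_one]
    conv_lhs => rw [bez]
    rw [hu, hv]; ring
  have huv : derivative u * v = u * derivative v := by
    have h2 : d * (d * (derivative u * v)) = d * (d * (u * derivative v)) := by
      have := h
      rw [hu, hv, derivative_mul, derivative_mul] at this
      ring_nf at this ⊢
      linear_combination this
    exact mul_left_cancel₀ hd0 (mul_left_cancel₀ hd0 h2)
  have hvdvd : v ∣ derivative v := by
    refine ⟨A * derivative u + B * derivative v, ?_⟩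
    calc derivative v = 1 * derivative v := (one_mul _).symm
    _ = (u * A + v * B) * derivative v := by rw [← hcop]
    _ = A * (u * derivative v) + v * (B * derivative v) := by ring
    _ = _ := by rw [← huv]; ring
  have hv' : derivative v = 0 := by
    by_contra h0
    have h1 : v.degree ≤ (derivative v).degree := Polynomial.degree_le_of_dvd hvdvd h0
    exact absurd h1 (not_le.mpr (Polynomial.degree_derivative_lt hv0))
  have hu' : derivative u = 0 := by
    have : derivative u * v = 0 := by rw [huv, hv', mul_zero]
    exact (mul_eq_zero.mp this).resolve_right hv0
  refine ⟨u.coeff 0, v.coeff 0, ?_, ?_⟩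
  · intro h0
    exact hv0 (by rw [Polynomial.eq_C_of_derivative_eq_zero hv', h0, map_zero])
  · rw [hu, hv, ← Polynomial.eq_C_of_derivative_eq_zero hv',
      ← Polynomial.eq_C_of_derivative_eq_zero hu']
    ring

section FieldLemmas
variable {F : Type*} [Field F] [Algebra k F] (pb : PoissonBracket k F)

theorem br_leibniz_right (a b c : F) :
    pb.br a (b * c) = b * pb.br a c + c * pb.br a b := by
  rw [pb.antisymm a (b*c), pb.leibniz, pb.antisymm b a, pb.antisymm c a]; ring

theorem br_div_left {y : F} (hy : y ≠ 0) (x g : F) :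
    pb.br (x / y) g = (y * pb.br x g - x * pb.br y g) / y ^ 2 := by
  have key : pb.br x g = (x / y) * pb.br y g + y * pb.br (x / y) g := by
    conv_lhs => rw [show x = (x / y) * y by field_simp]
    exact pb.leibniz _ _ _
  rw [eq_div_iff (pow_ne_zero 2 hy)]
  field_simp at key
  linear_combination -key

theorem br_div_right {v : F} (hv : v ≠ 0) (g u : F) :
    pb.br g (u / v) = (v * pb.br g u - u * pb.br g v) / v ^ 2 := by
  have key : pb.br g u = (u / v) * pb.br g v + v * pb.br g (u / v) := by
    conv_lhs => rw [show u = (u / v) * v by field_simp]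
    exact br_leibniz_right pb _ _ _
  rw [eq_div_iff (pow_ne_zero 2 hv)]
  field_simp at key
  linear_combination -key

theorem br_div_div {y v : F} (hy : y ≠ 0) (hv : v ≠ 0) (x u : F) :
    pb.br (x / y) (u / v) =
      (y * v * pb.br x u - y * u * pb.br x v - x * v * pb.br y u + x * u * pb.br y v)
        / (y ^ 2 * v ^ 2) := by
  rw [br_div_left pb hy, br_div_right pb hv, br_div_right pb hv]
  field_simp
  ring

end FieldLemmas

theorem center_part
    (k R : Type*) [Field k] [CharZero k] [CommRing R] [IsDomain R] [Algebra k R]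
    (δ : Derivation k R R) (hδ : δ ≠ 0)
    (pbF : PoissonBracket k (FractionRing (Polynomial R)))
    (compat : ∀ p q : Polynomial R,
      pbF.br (algebraMap (Polynomial R) (FractionRing (Polynomial R)) p)
          (algebraMap (Polynomial R) (FractionRing (Polynomial R)) q) =
        algebraMap (Polynomial R) (FractionRing (Polynomial R)) ((polyPB δ).br p q))
    (f : FractionRing (Polynomial R)) :
    (∀ g, pbF.br f g = 0) ↔
      ∃ a b : R, b ≠ 0 ∧ δ a * b = a * δ b ∧
        f = algebraMap (Polynomial R) (FractionRing (Polynomial R)) (Polynomial.C a)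
          / algebraMap (Polynomial R) (FractionRing (Polynomial R)) (Polynomial.C b) := by
  haveI : CharZero R := charZero_of_injective_algebraMap (algebraMap k R).injective
  haveI : CharZero (FractionRing R) :=
    charZero_of_injective_algebraMap (IsFractionRing.injective R (FractionRing R))
  set i := algebraMap (Polynomial R) (FractionRing (Polynomial R)) with hi
  have iInj : Function.Injective i := IsFractionRing.injective _ _
  have brC : ∀ (a : R) (u : R[X]), (polyPB δ).br (C a) u = C (δ a) * derivative u := by
    intro a u
    show polyBr δ (C a) u = _
    rw [polyBr_apply, coeffDeriv_C, derivative_C, zero_mul, sub_zero]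
  constructor
  · -- center element is a quotient of constants
    intro h
    obtain ⟨p, q, hqmem, hf⟩ := IsFractionRing.div_surjective (A := Polynomial R) f
    have hq0 : q ≠ 0 := mem_nonZeroDivisors_iff_ne_zero.mp hqmem
    have hiq : i q ≠ 0 := fun h0 => hq0 (iInj (by simpa using h0))
    obtain ⟨c, hc⟩ : ∃ c, δ c ≠ 0 := by
      by_contra h0
      push_neg at h0
      exact hδ (by ext x; simpa using h0 x)
    -- first equation: p' q = p q'
    have h1 : derivative p * q = p * derivative q := by
      have hx := h (i (C c))
      rw [← hf, br_div_left pbF hiq, compat, compat, _root_.div_eq_zero_iff] at hx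
      rcases hx with hx | hx
      swap
      · exact absurd hx (pow_ne_zero 2 hiq)
      have hz : q * (polyPB δ).br p (C c) - p * (polyPB δ).br q (C c) = 0 := by
        apply iInj
        rw [map_sub i, map_mul i, map_mul i, map_zero]
        exact hx
      have hz2 : (derivative p * q) * C (δ c) = (p * derivative q) * C (δ c) := by
        have e1 : (polyPB δ).br p (C c) = - (derivative p * C (δ c)) := by
          show polyBr δ p (C c) = _
          rw [polyBr_apply, coeffDeriv_C, derivative_C, mul_zero, zero_sub]
        have e2 : (polyPB δ).br q (C c) = - (derivative q * C (δ c)) := by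
          show polyBr δ q (C c) = _
          rw [polyBr_apply, coeffDeriv_C, derivative_C, mul_zero, zero_sub]
        rw [e1, e2] at hz
        linear_combination -hz
      have hCc : (C (δ c) : R[X]) ≠ 0 := fun h0 => hc (by simpa using h0)
      exact mul_right_cancel₀ hCc hz2
    -- pass to K[X], K = Frac R
    set φ : Polynomial R →+* Polynomial (FractionRing R) :=
      Polynomial.mapRingHom (algebraMap R (FractionRing R)) with hφ
    have φInj : Function.Injective φ :=
      Polynomial.map_injective _ (IsFractionRing.injective R (FractionRing R))
    have hq0' : φ q ≠ 0 := fun h0 => hq0 (φInj (by simpa using h0))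
    have eder : ∀ r : Polynomial R, derivative (φ r) = φ (derivative r) := fun r => by
      simp [hφ, Polynomial.derivative_map]
    have eC : ∀ x : R, φ (C x) = C (algebraMap R (FractionRing R) x) := fun x => by
      simp [hφ]
    have h1' : derivative (φ p) * φ q = φ p * derivative (φ q) := by
      rw [eder, eder, ← map_mul, ← map_mul, h1]
    obtain ⟨A, B, hB, hPB⟩ := const_of_wronskian_zero (φ p) (φ q) hq0' h1'
    -- common denominators
    obtain ⟨a₁, s₁, hs₁, hA⟩ := IsFractionRing.div_surjective (A := R) A
    obtain ⟨b₁, s₂, hs₂, hB'⟩ := IsFractionRing.div_surjective (A := R) B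
    have hs₁0 : s₁ ≠ 0 := mem_nonZeroDivisors_iff_ne_zero.mp hs₁
    have hs₂0 : s₂ ≠ 0 := mem_nonZeroDivisors_iff_ne_zero.mp hs₂
    have hs₁0' : algebraMap R (FractionRing R) s₁ ≠ 0 := fun h0 =>
      hs₁0 (IsFractionRing.injective R (FractionRing R) (by simpa using h0))
    have hs₂0' : algebraMap R (FractionRing R) s₂ ≠ 0 := fun h0 =>
      hs₂0 (IsFractionRing.injective R (FractionRing R) (by simpa using h0))
    have hb₁ : b₁ ≠ 0 := by
      intro h0
      exact hB (by rw [← hB', h0, map_zero, zero_div])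
    refine ⟨a₁ * s₂, b₁ * s₁, mul_ne_zero hb₁ hs₁0, ?_, ?_⟩
    all_goals {
      have key : p * C (b₁ * s₁) = q * C (a₁ * s₂) := by
        apply φInj
        have e1 : algebraMap R (FractionRing R) (b₁ * s₁)
            = B * algebraMap R (FractionRing R) (s₁ * s₂) := by
          rw [← hB', map_mul, map_mul]
          field_simp
        have e2 : algebraMap R (FractionRing R) (a₁ * s₂)
            = A * algebraMap R (FractionRing R) (s₁ * s₂) := by
          rw [← hA, map_mul, map_mul]
          field_simp
        rw [map_mul φ p (C (b₁ * s₁)), map_mul φ q (C (a₁ * s₂)), eC, eC, e1, e2,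
          map_mul Polynomial.C B _, map_mul Polynomial.C A _, ← mul_assoc, ← mul_assoc, hPB]
      have hCb : (C (b₁ * s₁) : R[X]) ≠ 0 := fun h0 =>
        (mul_ne_zero hb₁ hs₁0) (by simpa using h0)
      have hiCb : i (C (b₁ * s₁)) ≠ 0 := fun h0 => hCb (iInj (by simpa using h0))
      have hfeq : f = i (C (a₁ * s₂)) / i (C (b₁ * s₁)) := by
        rw [← hf, div_eq_div_iff hiq hiCb, ← map_mul, ← map_mul]
        exact congrArg i (by linear_combination key)
      first
      | exact hfeq
      | { -- the δ-condition
          have hx := h (i X)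
          rw [hfeq, br_div_left pbF hiCb, compat, compat, _root_.div_eq_zero_iff] at hx
          rcases hx with hx | hx
          swap
          · exact absurd hx (pow_ne_zero 2 hiCb)
          have hz : C (b₁ * s₁) * (polyPB δ).br (C (a₁ * s₂)) X
              - C (a₁ * s₂) * (polyPB δ).br (C (b₁ * s₁)) X = 0 := by
            apply iInj
            rw [map_sub i, map_mul i, map_mul i, map_zero]
            exact hx
          rw [brC, brC, derivative_X, mul_one, mul_one, sub_eq_zero, ← map_mul, ← map_mul] at hz
          have := Polynomial.C_injective hz
          linear_combination this }
    }
  · -- quotients of constants are central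
    rintro ⟨a, b, hb, hab, rfl⟩ g
    obtain ⟨u, v, hvmem, hg⟩ := IsFractionRing.div_surjective (A := Polynomial R) g
    have hv0 : v ≠ 0 := mem_nonZeroDivisors_iff_ne_zero.mp hvmem
    have hiv : i v ≠ 0 := fun h0 => hv0 (iInj (by simpa using h0))
    have hCb : (C b : R[X]) ≠ 0 := fun h0 => hb (by simpa using h0)
    have hiCb : i (C b) ≠ 0 := fun h0 => hCb (iInj (by simpa using h0))
    rw [← hg, br_div_div pbF hiCb hiv, compat, compat, compat, compat, _root_.div_eq_zero_iff]
    left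
    have hnum : C b * v * ((polyPB δ).br (C a) u) - C b * u * ((polyPB δ).br (C a) v)
        - C a * v * ((polyPB δ).br (C b) u) + C a * u * ((polyPB δ).br (C b) v) = 0 := by
      rw [brC, brC, brC, brC]
      have hC : (C (δ a) : R[X]) * C b = C a * C (δ b) := by
        rw [← map_mul, ← map_mul, hab]
      linear_combination (derivative u * v - u * derivative v) * hC
    calc i (C b) * i v * i ((polyPB δ).br (C a) u) - i (C b) * i u * i ((polyPB δ).br (C a) v)
          - i (C a) * i v * i ((polyPB δ).br (C b) u) + i (C a) * i u * i ((polyPB δ).br (C b) v)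
        = i (C b * v * ((polyPB δ).br (C a) u) - C b * u * ((polyPB δ).br (C a) v)
            - C a * v * ((polyPB δ).br (C b) u) + C a * u * ((polyPB δ).br (C b) v)) := by
          simp only [map_sub, map_add, map_mul]
      _ = 0 := by rw [hnum, map_zero]

end Aux

/-- Let `k` be a field of characteristic zero and `R` an integral domain
`k`-algebra with a nontrivial `k`-linear derivation `δ`.  Then
`{p, q} := p^δ * q' - p' * q^δ` is a Poisson bracket over `k` on `R[t]`; moreover
(1) the Poisson center of `Frac(R[t])` (with the uniquely extended bracket, captured by
quantifying over compatible brackets on `Frac(R[t])`) is exactly the field of constants of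
`(Frac R, δ)`, i.e. consists precisely of the elements `a / b` with `a, b ∈ R`, `b ≠ 0`
and `δ(a/b) = 0` (i.e. `δ a * b = a * δ b`); and
(2) if `P` is a prime differential ideal of `R` then `P·R[t]` is a Poisson prime ideal
of `R[t]`. -/

theorem polynomial_poissonBracket_from_derivation
    (k R : Type*) [Field k] [CharZero k] [CommRing R] [IsDomain R] [Algebra k R]
    (δ : Derivation k R R) (hδ : δ ≠ 0) :
    ∃ pb : PoissonBracket k (Polynomial R),
      (∀ p q : Polynomial R,
        pb.br p q = coeffDeriv δ p * Polynomial.derivative q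
          - Polynomial.derivative p * coeffDeriv δ q) ∧
      (∀ pbF : PoissonBracket k (FractionRing (Polynomial R)),
        (∀ p q : Polynomial R,
          pbF.br (algebraMap (Polynomial R) (FractionRing (Polynomial R)) p)
              (algebraMap (Polynomial R) (FractionRing (Polynomial R)) q) =
            algebraMap (Polynomial R) (FractionRing (Polynomial R)) (pb.br p q)) →
        ∀ f : FractionRing (Polynomial R),
          (∀ g, pbF.br f g = 0) ↔
            ∃ a b : R, b ≠ 0 ∧ δ a * b = a * δ b ∧
              f = algebraMap (Polynomial R) (FractionRing (Polynomial R)) (Polynomial.C a)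
                / algebraMap (Polynomial R) (FractionRing (Polynomial R)) (Polynomial.C b)) ∧
      (∀ P : Ideal R, P.IsPrime → (∀ x ∈ P, δ x ∈ P) →
        (P.map (Polynomial.C : R →+* Polynomial R)).IsPrime ∧
          pb.IsPoissonIdeal (P.map (Polynomial.C : R →+* Polynomial R))) := by
  refine ⟨polyPB δ, fun p q => rfl, ?_, ?_⟩
  · intro pbF compat f
    exact center_part k R δ hδ pbF compat f
  · intro P hP hd
    exact ideal_part δ P hP hd
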